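/- Let k be odd and q = 5^k, and let c ∈ F_q. The discriminant of the quadratic z^2 - (2c^2 + c + 1)z + (-2c^4 + 2c^3 - c^2 + c + 2) in z equals 2(c^2 - c - 2)^2 in F_q; consequently, if c^2 - c - 2 ≠ 0 then this quadratic has no root in F_q. -/

import Mathlib

theorem disc_computation (k : ℕ) (hk : Odd k)
    (F : Type*) [Field F] [Fintype F] (hF : Fintype.card F = 5 ^ k) (c : F) :
    (2 * c ^ 2 + c + 1) ^ 2 - 4 * (-2 * c ^ 4 + 2 * c ^ 3 - c ^ 2 + c + 2)
      = 2 * (c ^ 2 - c - 2) ^ 2 ∧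
    (c ^ 2 - c - 2 ≠ 0 →
      ¬ ∃ z : F, z ^ 2 - (2 * c ^ 2 + c + 1) * z
        + (-2 * c ^ 4 + 2 * c ^ 3 - c ^ 2 + c + 2) = 0) := by
  -- the characteristic is 5
  have hchar : ringChar F = 5 := by
    obtain ⟨n, hp, hcard⟩ := FiniteField.card F (ringChar F)
    have hdvd : ringChar F ∣ 5 ^ k := by
      rw [← hF, hcard]; exact dvd_pow_self _ n.pos.ne'
    have h := (Nat.dvd_prime (by norm_num)).mp (hp.dvd_of_dvd_pow hdvd)
    rcases h with h | h
    · exact absurd h hp.ne_one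
    · exact h
  haveI : CharP F 5 := by rw [← hchar]; infer_instance
  have h5 : (5 : F) = 0 := by exact_mod_cast CharP.cast_eq_zero F 5
  have hdisc : (2 * c ^ 2 + c + 1) ^ 2
      - 4 * (-2 * c ^ 4 + 2 * c ^ 3 - c ^ 2 + c + 2)
      = 2 * (c ^ 2 - c - 2) ^ 2 := by
    linear_combination (2 * c ^ 4 + 3 * c ^ 2 - 2 * c - 3) * h5
  refine ⟨hdisc, fun hc ⟨z, hz⟩ => ?_⟩
  -- 2 would be a square
  have hsq : IsSquare (2 : F) := by
    refine ⟨(2 * z - (2 * c ^ 2 + c + 1)) / (c ^ 2 - c - 2), ?_⟩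
    rw [div_mul_div_comm, eq_div_iff (mul_ne_zero hc hc)]
    linear_combination -4 * hz - hdisc
  rw [FiniteField.isSquare_two_iff] at hsq
  have hmod : 5 ^ k % 8 = 5 := by
    obtain ⟨m, rfl⟩ := hk
    have : ∀ m : ℕ, 5 ^ (2 * m + 1) % 8 = 5 := by
      intro m
      induction m with
      | zero => norm_num
      | succ n ih =>
        have h : 5 ^ (2 * (n + 1) + 1) = 5 ^ (2 * n + 1) * 25 := by ring
        omega
    exact this m
  rw [hF, hmod] at hsq
  exact hsq.2 rfl
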